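/- Let ψ0 and ψ1 be the substitutions on {a,b,c} defined by ψ0: a ↦ abac, b ↦ aba, c ↦ ab and ψ1: a ↦ acab, b ↦ aab, c ↦ ab, with one-sided fixed points v0 = ψ0(v0) and v1 = ψ1(v1) (both beginning with a). Let ν be the substitution on C = {0,1,...,11} determined by 0 ↦ 0123, 1 ↦ 0, 2 ↦ 405678, 3 ↦ 04, 4 ↦ 0·9·10, 5 ↦ 0·4·0·11·0·4, 6 ↦ 0, 7 ↦ 0·4·0·11, 8 ↦ 04, 9 ↦ 0, 10 ↦ 127623, 11 ↦ 04, with one-sided fixed point w' (beginning with 0), and let π': C → {a,b,c} × {a,b,c} × ℤ be given by 0 ↦ (a,a,0), 1 ↦ (b,c,0), 2 ↦ (a,a,−1), 3 ↦ (c,b,−1), 4 ↦ (b,b,0), 5 ↦ (a,c,0), 6 ↦ (b,a,−2), 7 ↦ (a,b,−1), 8 ↦ (c,a,−2), 9 ↦ (b,a,0), 10 ↦ (a,b,1), 11 ↦ (c,c,0). Then the sequence π'(w') simultaneously encodes v0 and v1: (i) for each i ∈ {0,1} and all n ≥ 0, v_i[n] equals the i-th component of π'(w'[n]); and (ii) for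 all n ≥ 0, the brick π'(w'[n]) = (x0, x1, s) joins with the brick π'(w'[n+1]) = (y0, y1, t) with respect to (ψ0, ψ1), i.e., |ψ0(x0)| − s − |ψ1(x1)| + t = 0. -/

import Mathlib

/-- The alphabet `{a, b, c}`. -/
inductive A : Type
  | a | b | c
deriving DecidableEq, Repr

/-- The substitution `ψ0 : a ↦ abac, b ↦ aba, c ↦ ab`. -/
def psi0 : A → List A
  | A.a => [A.a, A.b, A.a, A.c]
  | A.b => [A.a, A.b, A.a]
  | A.c => [A.a, A.b]

/-- The substitution `ψ1 : a ↦ acab, b ↦ aab, c ↦ ab`. -/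
def psi1 : A → List A
  | A.a => [A.a, A.c, A.a, A.b]
  | A.b => [A.a, A.a, A.b]
  | A.c => [A.a, A.b]

/-- The action of a morphism (given by its values on letters) on finite words. -/
def applyMorphism {α β : Type*} (φ : α → List β) (l : List α) : List β :=
  l.flatMap φ

/-- The prefix `u[:n]` of length `n` of an infinite word `u`. -/
def pref {α : Type*} (u : ℕ → α) (n : ℕ) : List α :=
  (List.range n).map u

/-- A finite word `l` is a prefix of the infinite word `u`. -/
def PrefixOfSeq {α : Type*} (l : List α) (u : ℕ → α) : Prop :=
  ∀ i : ℕ, ∀ h : i < l.length, l.get ⟨i, h⟩ = u i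

/-- The infinite word `u` is a (one-sided) fixed point of the substitution `φ`,
i.e. `φ(u) = u`: the image of every prefix of `u` is again a prefix of `u`. -/
def IsFixedPointOf {α : Type*} (φ : α → List α) (u : ℕ → α) : Prop :=
  ∀ n : ℕ, PrefixOfSeq (applyMorphism φ (pref u n)) u

/-- A brick over `{a, b, c}`. -/
abbrev Brick : Type := A × A × ℤ

/-- The brick `(x0, x1, s)` joins with the brick `(y0, y1, t)` with respect to
`(ψ0, ψ1)` if `|ψ0(x0)| − s − |ψ1(x1)| + t = 0`. -/
def Joins (b0 b1 : Brick) : Prop :=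
  ((psi0 b0.1).length : ℤ) - b0.2.2 - ((psi1 b0.2.1).length : ℤ) + b1.2.2 = 0

/-- The substitution `ν` over `C = {0, 1, …, 11}`. -/
def nu : Fin 12 → List (Fin 12)
  | 0 => [0, 1, 2, 3]
  | 1 => [0]
  | 2 => [4, 0, 5, 6, 7, 8]
  | 3 => [0, 4]
  | 4 => [0, 9, 10]
  | 5 => [0, 4, 0, 11, 0, 4]
  | 6 => [0]
  | 7 => [0, 4, 0, 11]
  | 8 => [0, 4]
  | 9 => [0]
  | 10 => [1, 2, 7, 6, 2, 3]
  | 11 => [0, 4]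

/-- The map `π' : C → B({a, b, c})`. -/
def piB' : Fin 12 → Brick
  | 0 => (A.a, A.a, 0)
  | 1 => (A.b, A.c, 0)
  | 2 => (A.a, A.a, -1)
  | 3 => (A.c, A.b, -1)
  | 4 => (A.b, A.b, 0)
  | 5 => (A.a, A.c, 0)
  | 6 => (A.b, A.a, -2)
  | 7 => (A.a, A.b, -1)
  | 8 => (A.c, A.a, -2)
  | 9 => (A.b, A.a, 0)
  | 10 => (A.a, A.b, 1)
  | 11 => (A.c, A.c, 0)

-- ### Auxiliary development

abbrev CC := Fin 12
abbrev DD := CC × CC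

def fA0 (c : CC) : A := (piB' c).1
def fA1 (c : CC) : A := (piB' c).2.1

def pairup : List CC → CC → List DD
  | [], _ => []
  | [x], s => [(x, s)]
  | x :: y :: t, s => (x, y) :: pairup (y :: t) s

def nu2 (d : DD) : List DD := pairup (nu d.1) ((nu d.2).headI)

def G3L : List (CC × CC × CC) :=
  [(0,0,4),(0,1,2),(0,4,0),(0,5,6),(0,9,10),(0,11,0),(1,2,3),(1,2,7),(2,3,0),(2,7,6),
   (3,0,1),(3,0,4),(3,0,9),(4,0,0),(4,0,1),(4,0,5),(4,0,11),(5,6,7),(6,2,3),(6,7,8),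
   (7,6,2),(7,8,0),(8,0,4),(9,10,0),(10,0,1),(11,0,4)]

def g3b (d e : DD) : Bool := d.2 == e.1 && G3L.contains (d.1, d.2, e.2)

def Rg3 (d e : DD) : Prop := g3b d e = true

def chainb {α : Type*} (R : α → α → Bool) : List α → Bool
  | [] => true
  | [_] => true
  | x :: y :: t => R x y && chainb R (y :: t)

lemma chainb_iff {α : Type*} (R : α → α → Bool) :
    ∀ l : List α, chainb R l = true ↔ List.Chain' (fun x y => R x y = true) l := by
  intro l
  match l with
  | [] => simp [chainb, List.Chain']
  | [x] => simp [chainb, List.Chain']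
  | x :: y :: t =>
    have ih := chainb_iff R (y :: t); unfold List.Chain' at ih ⊢; rw [List.isChain_cons_cons, ← ih]
    simp [chainb, Bool.and_eq_true]

def G2L : List DD :=
  [(0,0),(0,1),(0,4),(0,5),(0,9),(0,11),(1,2),(2,3),(2,7),(3,0),
   (4,0),(5,6),(6,2),(6,7),(7,6),(7,8),(8,0),(9,10),(10,0),(11,0)]

def DlastL : List DD := [(0,1),(3,0),(4,0),(10,0)]

def p0 (d : DD) : List A := if d = (5,6) then [A.a, A.b] else []
def q0 (d : DD) : List A := if d = (1,2) ∨ d = (6,2) ∨ d = (9,10) then [A.b, A.a] else []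
def p1 (d : DD) : List A :=
  if d = (5,6) then [A.a, A.c, A.a, A.b]
  else if d = (2,3) ∨ d = (2,7) ∨ d = (6,7) then [A.a]
  else if d = (7,6) ∨ d = (7,8) then [A.a, A.c]
  else []
def q1 (d : DD) : List A :=
  if d = (1,2) ∨ d = (6,2) then [A.b] else if d = (9,10) then [A.c, A.a, A.b] else []

def FF0 (U : List DD) : List A := U.map (fun d => fA0 d.1)
def FF1 (U : List DD) : List A := U.map (fun d => fA1 d.1)
def r0 (e d : DD) : List A := (psi0 (fA0 d.1) ++ p0 d).drop (p0 e).length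
def r1 (e d : DD) : List A := (psi1 (fA1 d.1) ++ p1 d).drop (p1 e).length

-- decidable checks
set_option maxRecDepth 8000

set_option maxRecDepth 8000

def bnd {α : Type*} (R : α → α → Bool) (u v : List α) : Bool :=
  match u.getLast?, v.head? with
  | some x, some y => R x y
  | _, _ => true

lemma bnd_spec {α : Type*} (R : α → α → Bool) (u v : List α) (h : bnd R u v = true) :
    ∀ x ∈ u.getLast?, ∀ y ∈ v.head?, R x y = true := by
  intro x hx y hy
  rw [Option.mem_def] at hx hy
  unfold bnd at h
  rw [hx, hy] at h
  exact h

lemma chk_mapfst : ∀ d ∈ G2L, (nu2 d).map Prod.fst = nu d.1 := by decide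
lemma nu2_ne_nil : ∀ d : DD, nu2 d ≠ [] := by decide
lemma nu_ne_nil : ∀ c : CC, nu c ≠ [] := by decide
lemma chk_C0 : ∀ d ∈ G2L, ∀ x ∈ nu2 d, x ∈ G2L := by decide
lemma chk_C1a' : ∀ d ∈ G2L, chainb g3b (nu2 d) = true := by decide
lemma chk_C1a : ∀ d ∈ G2L, List.Chain' Rg3 (nu2 d) :=
  fun d hd => (chainb_iff g3b (nu2 d)).mp (chk_C1a' d hd)
lemma chk_C1b' : ∀ t ∈ G3L, bnd g3b (nu2 (t.1, t.2.1)) (nu2 (t.2.1, t.2.2)) = true := by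
  intro t ht
  simp only [G3L, G2L, DlastL, List.mem_cons, List.not_mem_nil, or_false] at ht
  rcases ht with rfl|rfl|rfl|rfl|rfl|rfl|rfl|rfl|rfl|rfl|rfl|rfl|rfl|rfl|rfl|rfl|rfl|rfl|rfl|rfl|rfl|rfl|rfl|rfl|rfl|rfl <;> decide
lemma chk_last : ∀ d ∈ DlastL, ∀ x ∈ (nu2 d).getLast?, x ∈ DlastL := by decide
lemma chk_lastpq : ∀ d ∈ DlastL, p0 d = [] ∧ q0 d = [] ∧ p1 d = [] ∧ q1 d = [] := by decide
lemma chk_base0 : psi0 (fA0 0) ++ p0 (0,1) = FF0 (nu2 (0,1)) ++ q0 (0,1) := by decide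
lemma chk_base1 : psi1 (fA1 0) ++ p1 (0,1) = FF1 (nu2 (0,1)) ++ q1 (0,1) := by decide

lemma chk_LC0 : ∀ t ∈ G3L,
    psi0 (fA0 t.2.1) ++ p0 (t.2.1, t.2.2) = p0 (t.1, t.2.1) ++ r0 (t.1, t.2.1) (t.2.1, t.2.2) ∧
    FF0 (nu2 (t.2.1, t.2.2)) ++ q0 (t.2.1, t.2.2) = q0 (t.1, t.2.1) ++ r0 (t.1, t.2.1) (t.2.1, t.2.2) := by
  intro t ht
  simp only [G3L, G2L, DlastL, List.mem_cons, List.not_mem_nil, or_false] at ht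
  rcases ht with rfl|rfl|rfl|rfl|rfl|rfl|rfl|rfl|rfl|rfl|rfl|rfl|rfl|rfl|rfl|rfl|rfl|rfl|rfl|rfl|rfl|rfl|rfl|rfl|rfl|rfl <;> exact ⟨by decide, by decide⟩

lemma chk_LC1 : ∀ t ∈ G3L,
    psi1 (fA1 t.2.1) ++ p1 (t.2.1, t.2.2) = p1 (t.1, t.2.1) ++ r1 (t.1, t.2.1) (t.2.1, t.2.2) ∧
    FF1 (nu2 (t.2.1, t.2.2)) ++ q1 (t.2.1, t.2.2) = q1 (t.1, t.2.1) ++ r1 (t.1, t.2.1) (t.2.1, t.2.2) := by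
  intro t ht
  simp only [G3L, G2L, DlastL, List.mem_cons, List.not_mem_nil, or_false] at ht
  rcases ht with rfl|rfl|rfl|rfl|rfl|rfl|rfl|rfl|rfl|rfl|rfl|rfl|rfl|rfl|rfl|rfl|rfl|rfl|rfl|rfl|rfl|rfl|rfl|rfl|rfl|rfl <;> exact ⟨by decide, by decide⟩

def dlt (c : CC) : ℤ := ((psi1 (piB' c).2.1).length : ℤ) - ((psi0 (piB' c).1).length : ℤ)
def rjb (x y : CC) : Bool := (piB' y).2.2 == (piB' x).2.2 + dlt x
def Rj (x y : CC) : Prop := rjb x y = true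
lemma chk_J1' : ∀ c : CC, chainb rjb (nu c) = true := by decide
lemma chk_J1 : ∀ c : CC, List.Chain' Rj (nu c) := fun c => (chainb_iff rjb (nu c)).mp (chk_J1' c)
lemma chk_J2' : ∀ c c' : CC, bnd rjb (nu c) (nu c') = true := by decide

-- ## generic morphism lemmas
lemma am_cons {α β : Type*} (f : α → List β) (x : α) (t : List α) :
    applyMorphism f (x :: t) = f x ++ applyMorphism f t := by
  simp [applyMorphism]

lemma am_append {α β : Type*} (f : α → List β) (u v : List α) :
    applyMorphism f (u ++ v) = applyMorphism f u ++ applyMorphism f v := by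
  simp [applyMorphism]

lemma am_nil {α β : Type*} (f : α → List β) : applyMorphism f ([] : List α) = [] := rfl

lemma g3b_iff (d e : DD) : g3b d e = true ↔ d.2 = e.1 ∧ (d.1, d.2, e.2) ∈ G3L := by
  constructor
  · intro h
    simp only [g3b, Bool.and_eq_true, beq_iff_eq] at h
    exact ⟨h.1, by simpa using h.2⟩
  · intro ⟨h1, h2⟩
    simp only [g3b, Bool.and_eq_true, beq_iff_eq]
    exact ⟨h1, by simpa using h2⟩

-- ## the sequence of pair-words
def W2 : ℕ → List DD
  | 0 => [((0 : CC), (1 : CC))]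
  | k + 1 => applyMorphism nu2 (W2 k)

lemma NU2_map_fst : ∀ U : List DD, (∀ x ∈ U, x ∈ G2L) →
    (applyMorphism nu2 U).map Prod.fst = applyMorphism nu (U.map Prod.fst) := by
  intro U
  induction U with
  | nil => intro _; rfl
  | cons d t ih =>
    intro hm
    rw [am_cons, List.map_cons, am_cons, List.map_append, ih (fun x hx => hm x (List.mem_cons_of_mem d hx)),
      chk_mapfst d (hm d (List.mem_cons_self))]

lemma chainstep : ∀ U : List DD, (∀ x ∈ U, x ∈ G2L) → List.Chain' Rg3 U →
    (∀ x ∈ applyMorphism nu2 U, x ∈ G2L) ∧ List.Chain' Rg3 (applyMorphism nu2 U) := by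
  intro U
  induction U with
  | nil => intro _ _; exact ⟨by simp [applyMorphism], by simp [applyMorphism, List.Chain']⟩
  | cons d t ih =>
    intro hm hc
    have hd : d ∈ G2L := hm d (List.mem_cons_self)
    have hmt : ∀ x ∈ t, x ∈ G2L := fun x hx => hm x (List.mem_cons_of_mem d hx)
    obtain ⟨ihm, ihc⟩ := ih hmt hc.tail
    constructor
    · intro x hx
      rw [am_cons, List.mem_append] at hx
      rcases hx with hx | hx
      · exact chk_C0 d hd x hx
      · exact ihm x hx
    · simp only [List.Chain']; rw [am_cons, List.isChain_append]
      refine ⟨chk_C1a d hd, ihc, ?_⟩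
      intro x hx y hy
      cases t with
      | nil => simp [applyMorphism] at hy
      | cons e t' =>
        have hde : Rg3 d e := (List.isChain_cons_cons.mp hc).1
        obtain ⟨h1, h2⟩ := (g3b_iff d e).mp hde
        have hb := bnd_spec g3b _ _ (chk_C1b' (d.1, d.2, e.2) h2)
        have hy' : y ∈ (nu2 (d.2, e.2)).head? := by
          rw [am_cons] at hy
          cases hnu : nu2 e with
          | nil => exact absurd hnu (nu2_ne_nil e)
          | cons a l =>
            rw [hnu, List.cons_append, List.head?_cons] at hy
            rw [show ((d.2, e.2) : DD) = e from by rw [h1], hnu, List.head?_cons]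
            exact hy
        exact hb x hx y hy'

lemma chainW2 : ∀ k, (∀ x ∈ W2 k, x ∈ G2L) ∧ List.Chain' Rg3 (W2 k) := by
  intro k
  induction k with
  | zero =>
    constructor
    · intro x hx
      simp only [W2, List.mem_singleton] at hx
      rw [hx]; decide
    · simp [W2, List.Chain']
  | succ k ih => exact chainstep (W2 k) ih.1 ih.2

lemma headW2 : ∀ k, (W2 k).head? = some ((0 : CC), (1 : CC)) := by
  intro k
  induction k with
  | zero => rfl
  | succ k ih =>
    cases hW : W2 k with
    | nil => rw [hW] at ih; cases ih
    | cons y t =>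
      rw [hW, List.head?_cons, Option.some.injEq] at ih
      show (applyMorphism nu2 (W2 k)).head? = _
      rw [hW, ih, am_cons]
      rw [show nu2 ((0 : CC), (1 : CC)) = [(0,1),(1,2),(2,3),(3,0)] from by decide]
      rfl

lemma decompW2 : ∀ k, ∃ U d, W2 k = U ++ [d] ∧ d ∈ DlastL := by
  intro k
  induction k with
  | zero => exact ⟨[], ((0 : CC), (1 : CC)), rfl, by decide⟩
  | succ k ih =>
    obtain ⟨U, d, hUd, hd⟩ := ih
    have hne := nu2_ne_nil d
    refine ⟨applyMorphism nu2 U ++ (nu2 d).dropLast, (nu2 d).getLast hne, ?_, ?_⟩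
    · show applyMorphism nu2 (W2 k) = _
      rw [hUd, am_append, List.append_assoc]
      congr 1
      rw [am_cons, am_nil, List.append_nil]
      exact (List.dropLast_append_getLast hne).symm
    · refine chk_last d hd _ ?_
      rw [List.getLast?_eq_getLast hne]
      rfl

lemma lenNU2 : ∀ U : List DD, U.length ≤ (applyMorphism nu2 U).length := by
  intro U
  induction U with
  | nil => simp [applyMorphism]
  | cons d t ih =>
    rw [am_cons, List.length_append, List.length_cons]
    have : 1 ≤ (nu2 d).length := List.length_pos_iff.mpr (nu2_ne_nil d)
    omega

lemma lenW2 : ∀ k, k < (W2 k).length := by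
  intro k
  induction k with
  | zero => simp [W2]
  | succ k ih =>
    have hh := headW2 k
    cases hW : W2 k with
    | nil => rw [hW] at hh; cases hh
    | cons y t =>
      rw [hW, List.head?_cons, Option.some.injEq] at hh
      have : (W2 (k + 1)).length = (nu2 y).length + (applyMorphism nu2 t).length := by
        show (applyMorphism nu2 (W2 k)).length = _
        rw [hW, am_cons, List.length_append]
      rw [this, hh, show (nu2 ((0:CC),(1:CC))).length = 4 from by decide]
      have h2 := lenNU2 t
      rw [hW] at ih
      simp only [List.length_cons] at ih
      omega

-- ## the border word lemma
lemma border_main (psi : A → List A) (f : CC → A) (p q : DD → List A)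
    (hbase : psi (f 0) ++ p ((0:CC),(1:CC)) = (nu2 ((0:CC),(1:CC))).map (fun x => f x.1) ++ q ((0:CC),(1:CC)))
    (hLC : ∀ e d : DD, Rg3 e d → ∃ r, psi (f d.1) ++ p d = p e ++ r ∧
        (nu2 d).map (fun x => f x.1) ++ q d = q e ++ r) :
    ∀ (U : List DD) (d : DD), (U ++ [d]).head? = some ((0:CC),(1:CC)) →
      List.Chain' Rg3 (U ++ [d]) →
      (U ++ [d]).flatMap (fun x => psi (f x.1)) ++ p d
        = (applyMorphism nu2 (U ++ [d])).map (fun x => f x.1) ++ q d := by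
  intro U
  induction U using List.reverseRecOn with
  | nil =>
    intro d hh _
    simp only [List.nil_append, List.head?_cons, Option.some.injEq] at hh
    subst hh
    simpa [applyMorphism] using hbase
  | append_singleton U e ih =>
    intro d hh hc
    have hhd : (U ++ [e]).head? = some ((0:CC),(1:CC)) := by
      cases U with
      | nil => simpa using hh
      | cons a t => simpa using hh
    obtain ⟨hch2, _, hbd⟩ := List.isChain_append.mp hc
    have hg : Rg3 e d := hbd e (by simp) d rfl
    have happ := ih e hhd hch2
    obtain ⟨r, hr1, hr2⟩ := hLC e d hg
    have L1 : ((U ++ [e]) ++ [d]).flatMap (fun x => psi (f x.1))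
        = (U ++ [e]).flatMap (fun x => psi (f x.1)) ++ psi (f d.1) := by simp
    have L2 : (applyMorphism nu2 ((U ++ [e]) ++ [d])).map (fun x => f x.1)
        = (applyMorphism nu2 (U ++ [e])).map (fun x => f x.1) ++ (nu2 d).map (fun x => f x.1) := by
      simp [applyMorphism]
    rw [L1, L2, List.append_assoc _ (psi (f d.1)) (p d), hr1,
      List.append_assoc _ ((nu2 d).map (fun x => f x.1)) (q d), hr2,
      ← List.append_assoc, ← List.append_assoc, happ]

lemma LC0w : ∀ e d : DD, Rg3 e d → ∃ r, psi0 (fA0 d.1) ++ p0 d = p0 e ++ r ∧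
    (nu2 d).map (fun x => fA0 x.1) ++ q0 d = q0 e ++ r := by
  rintro ⟨e1, e2⟩ ⟨d1, d2⟩ h
  obtain ⟨h1, h2⟩ := (g3b_iff _ _).mp h
  dsimp at h1 h2
  subst h1
  exact ⟨r0 (e1, e2) (e2, d2), (chk_LC0 (e1, e2, d2) h2).1, (chk_LC0 (e1, e2, d2) h2).2⟩

lemma LC1w : ∀ e d : DD, Rg3 e d → ∃ r, psi1 (fA1 d.1) ++ p1 d = p1 e ++ r ∧
    (nu2 d).map (fun x => fA1 x.1) ++ q1 d = q1 e ++ r := by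
  rintro ⟨e1, e2⟩ ⟨d1, d2⟩ h
  obtain ⟨h1, h2⟩ := (g3b_iff _ _).mp h
  dsimp at h1 h2
  subst h1
  exact ⟨r1 (e1, e2) (e2, d2), (chk_LC1 (e1, e2, d2) h2).1, (chk_LC1 (e1, e2, d2) h2).2⟩

-- ## agreement of W2 with the fixed point w'
lemma agreeW2 (w' : ℕ → Fin 12) (hw0 : w' 0 = 0) (hfixw : IsFixedPointOf nu w') :
    ∀ k i (h : i < (W2 k).length), ((W2 k).get ⟨i, h⟩).1 = w' i := by
  intro k
  induction k with
  | zero =>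
    intro i h
    simp only [W2, List.length_singleton] at h
    have : i = 0 := by omega
    subst this
    simpa [W2] using hw0.symm
  | succ k ih =>
    have hmf : (W2 k).map Prod.fst = pref w' (W2 k).length := by
      apply List.ext_getElem
      · simp [pref]
      · intro i h1 h2
        have := ih i (by simpa using h1)
        simp only [List.get_eq_getElem] at this
        simp [pref, this]
    have hNU : (W2 (k+1)).map Prod.fst = applyMorphism nu (pref w' (W2 k).length) := by
      show (applyMorphism nu2 (W2 k)).map Prod.fst = _
      rw [NU2_map_fst (W2 k) (chainW2 k).1, hmf]
    intro i h
    have h2 : i < (applyMorphism nu (pref w' (W2 k).length)).length := by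
      rw [← hNU]; simpa using h
    have hfx := hfixw (W2 k).length i h2
    simp only [List.get_eq_getElem] at hfx
    have h3 : i < ((W2 (k+1)).map Prod.fst).length := by simpa using h
    have := List.getElem_of_eq hNU h3
    rw [List.getElem_map] at this
    rw [List.get_eq_getElem]
    rw [this, hfx]

lemma am_map {α β γ : Type*} (g : α → β) (f : β → List γ) (U : List α) :
    applyMorphism f (U.map g) = U.flatMap (fun x => f (g x)) := by
  induction U with
  | nil => rfl
  | cons a t ih => simp [applyMorphism, List.flatMap_cons] at ih ⊢; rw [ih]

lemma keyW2 (v0 v1 : ℕ → A) (hv0 : v0 0 = A.a) (hfix0 : IsFixedPointOf psi0 v0)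
    (hv1 : v1 0 = A.a) (hfix1 : IsFixedPointOf psi1 v1) :
    ∀ k i (h : i < (W2 k).length),
      fA0 ((W2 k).get ⟨i, h⟩).1 = v0 i ∧ fA1 ((W2 k).get ⟨i, h⟩).1 = v1 i := by
  intro k
  induction k with
  | zero =>
    intro i h
    simp only [W2, List.length_singleton] at h
    have hi : i = 0 := by omega
    subst hi
    exact ⟨by rw [hv0]; rfl, by rw [hv1]; rfl⟩
  | succ k ih =>
    have hFF0 : (W2 k).map (fun x => fA0 x.1) = pref v0 (W2 k).length := by
      apply List.ext_getElem
      · simp [pref]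
      · intro i h1 h2
        have := (ih i (by simpa using h1)).1
        simp only [List.get_eq_getElem] at this
        simp [pref, this]
    have hFF1 : (W2 k).map (fun x => fA1 x.1) = pref v1 (W2 k).length := by
      apply List.ext_getElem
      · simp [pref]
      · intro i h1 h2
        have := (ih i (by simpa using h1)).2
        simp only [List.get_eq_getElem] at this
        simp [pref, this]
    obtain ⟨U, d, hUd, hdl⟩ := decompW2 k
    obtain ⟨hp0, hq0, hp1, hq1⟩ := chk_lastpq d hdl
    have hmain0 := border_main psi0 fA0 p0 q0 chk_base0 LC0w U d
      (by rw [← hUd]; exact headW2 k) (by rw [← hUd]; exact (chainW2 k).2)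
    rw [← hUd, hp0, hq0, List.append_nil, List.append_nil] at hmain0
    have hmain1 := border_main psi1 fA1 p1 q1 chk_base1 LC1w U d
      (by rw [← hUd]; exact headW2 k) (by rw [← hUd]; exact (chainW2 k).2)
    rw [← hUd, hp1, hq1, List.append_nil, List.append_nil] at hmain1
    have E0 : applyMorphism psi0 (pref v0 (W2 k).length) = (W2 (k+1)).map (fun x => fA0 x.1) := by
      rw [← hFF0, am_map]; exact hmain0
    have E1 : applyMorphism psi1 (pref v1 (W2 k).length) = (W2 (k+1)).map (fun x => fA1 x.1) := by
      rw [← hFF1, am_map]; exact hmain1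
    intro i h
    constructor
    · have h0 : i < (applyMorphism psi0 (pref v0 (W2 k).length)).length := by
        rw [E0]; simpa using h
      have hfx := hfix0 (W2 k).length i h0
      simp only [List.get_eq_getElem] at hfx
      have e0 := List.getElem_of_eq E0 h0
      rw [List.getElem_map] at e0
      rw [List.get_eq_getElem, ← e0]
      exact hfx
    · have h0 : i < (applyMorphism psi1 (pref v1 (W2 k).length)).length := by
        rw [E1]; simpa using h
      have hfx := hfix1 (W2 k).length i h0
      simp only [List.get_eq_getElem] at hfx
      have e1 := List.getElem_of_eq E1 h0
      rw [List.getElem_map] at e1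
      rw [List.get_eq_getElem, ← e1]
      exact hfx

lemma chainJ : ∀ V : List CC, List.Chain' Rj (applyMorphism nu V) := by
  intro V
  induction V with
  | nil => simp [applyMorphism, List.Chain']
  | cons c t ih =>
    simp only [List.Chain']; rw [am_cons, List.isChain_append]
    refine ⟨chk_J1 c, ih, ?_⟩
    intro x hx y hy
    cases t with
    | nil => simp [applyMorphism] at hy
    | cons c' t' =>
      refine bnd_spec rjb _ _ (chk_J2' c c') x hx y ?_
      rw [am_cons] at hy
      cases hnu : nu c' with
      | nil => exact absurd hnu (nu_ne_nil c')
      | cons a l =>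
        rw [hnu, List.cons_append, List.head?_cons] at hy
        simpa using hy

lemma rj_iff (x y : CC) : Rj x y ↔ (piB' y).2.2 = (piB' x).2.2 + dlt x := by
  simp [Rj, rjb]


/-- The sequence `π'(w')` simultaneously encodes the fixed points `v0` and `v1`
of `ψ0` and `ψ1`: projecting onto the `i`-th components recovers `v_i`, and any
two consecutive bricks join with respect to `(ψ0, ψ1)`. -/
theorem simultaneous_encoding_example2
    (v0 v1 : ℕ → A)
    (hv0 : v0 0 = A.a) (hfix0 : IsFixedPointOf psi0 v0)
    (hv1 : v1 0 = A.a) (hfix1 : IsFixedPointOf psi1 v1)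
    (w' : ℕ → Fin 12)
    (hw0 : w' 0 = 0) (hfixw : IsFixedPointOf nu w') :
    (∀ n : ℕ, v0 n = (piB' (w' n)).1 ∧ v1 n = (piB' (w' n)).2.1) ∧
    (∀ n : ℕ, Joins (piB' (w' n)) (piB' (w' (n + 1)))) := by

  constructor
  · intro n
    have h := lenW2 n
    have hk := keyW2 v0 v1 hv0 hfix0 hv1 hfix1 n n h
    have ha := agreeW2 w' hw0 hfixw n n h
    constructor
    · rw [← hk.1, ha]; rfl
    · rw [← hk.2, ha]; rfl
  · intro n
    have hlen : n + 1 < (W2 (n+2)).length := by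
      have h1 := lenW2 (n+2); omega
    have hm : (W2 (n+2)).map Prod.fst = applyMorphism nu ((W2 (n+1)).map Prod.fst) := by
      show (applyMorphism nu2 (W2 (n+1))).map Prod.fst = _
      exact NU2_map_fst _ (chainW2 (n+1)).1
    have hcj : List.Chain' Rj ((W2 (n+2)).map Prod.fst) := by
      rw [hm]; exact chainJ _
    have hbound : n < ((W2 (n+2)).map Prod.fst).length - 1 := by
      simp only [List.length_map]; omega
    have hrel := List.isChain_iff_getElem.mp hcj n (by omega)
    have hg1 : (((W2 (n+2)).map Prod.fst).get ⟨n, by simp only [List.length_map]; omega⟩) = w' n := by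
      simp only [List.get_eq_getElem, List.getElem_map]
      have := agreeW2 w' hw0 hfixw (n+2) n (by omega)
      simpa [List.get_eq_getElem] using this
    have hg2 : (((W2 (n+2)).map Prod.fst).get ⟨n+1, by simp only [List.length_map]; omega⟩) = w' (n+1) := by
      simp only [List.get_eq_getElem, List.getElem_map]
      have := agreeW2 w' hw0 hfixw (n+2) (n+1) hlen
      simpa [List.get_eq_getElem] using this
    simp only [List.get_eq_getElem] at hg1 hg2
    rw [hg1, hg2] at hrel
    rw [rj_iff] at hrel
    unfold Joins
    unfold dlt at hrel
    omega
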